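/- core(G) is a critical set if and only if there exists a matching from N(core(G)) into core(G). -/

import Mathlib

open Classical Finset

/-- Neighborhood of a set of vertices: all vertices adjacent to some vertex of `X`. -/
noncomputable def nbhd {V : Type*} (G : SimpleGraph V) [Fintype V] (X : Finset V) : Finset V :=
  Finset.univ.filter (fun v => ∃ x ∈ X, G.Adj x v)

/-- The difference `d(X) = |X| - |N(X)|`. -/
noncomputable def gdiff {V : Type*} (G : SimpleGraph V) [Fintype V] (X : Finset V) : ℤ :=
  (X.card : ℤ) - ((nbhd G X).card : ℤ)

/-- `X` is an independent set of `G`. -/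
def IsIndep {V : Type*} (G : SimpleGraph V) (X : Finset V) : Prop :=
  ∀ x ∈ X, ∀ y ∈ X, ¬ G.Adj x y

/-- The critical difference `d_c(G) = max { d(X) : X ⊆ V(G) }`. -/
noncomputable def critDiff {V : Type*} (G : SimpleGraph V) [Fintype V] : ℤ :=
  Finset.univ.powerset.sup' ⟨∅, Finset.empty_mem_powerset _⟩ (gdiff G)

/-- `X` is a critical set of `G`. -/
noncomputable def IsCritical {V : Type*} (G : SimpleGraph V) [Fintype V] (X : Finset V) : Prop :=
  gdiff G X = critDiff G

/-- `ker G` : the intersection of all critical sets of `G`. -/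
noncomputable def kerG {V : Type*} (G : SimpleGraph V) [Fintype V] : Finset V :=
  Finset.univ.filter (fun v => ∀ X : Finset V, IsCritical G X → v ∈ X)

/-- `diadem G` : the union of all critical independent sets of `G`. -/
noncomputable def diademG {V : Type*} (G : SimpleGraph V) [Fintype V] : Finset V :=
  Finset.univ.filter (fun v => ∃ X : Finset V, IsCritical G X ∧ IsIndep G X ∧ v ∈ X)

/-- The independence number `α(G)`. -/
noncomputable def alphaG {V : Type*} (G : SimpleGraph V) [Fintype V] : ℕ :=
  (Finset.univ.powerset.filter (IsIndep G)).sup Finset.card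

/-- `core G` : the intersection of all maximum independent sets of `G`. -/
noncomputable def coreG {V : Type*} (G : SimpleGraph V) [Fintype V] : Finset V :=
  Finset.univ.filter (fun v => ∀ I : Finset V, IsIndep G I → I.card = alphaG G → v ∈ I)

/-- `M` is a matching of `G`, given as a finite set of pairwise disjoint edges of `G`. -/
def IsMatchingF {V : Type*} (G : SimpleGraph V) (M : Finset (Sym2 V)) : Prop :=
  (↑M : Set (Sym2 V)) ⊆ G.edgeSet ∧
    ∀ e₁ ∈ M, ∀ e₂ ∈ M, e₁ ≠ e₂ → ∀ v : V, v ∈ e₁ → v ∉ e₂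

/-- The matching number `μ(G)`. -/
noncomputable def matchNum {V : Type*} (G : SimpleGraph V) [Fintype V] : ℕ :=
  ((Finset.univ : Finset (Finset (Sym2 V))).filter (IsMatchingF G)).sup Finset.card

/-- There is a matching from `A` into `B`: an injection of `A` into `B` along edges of `G`. -/
def MatchingFromInto {V : Type*} (G : SimpleGraph V) (A B : Finset V) : Prop :=
  ∃ f : V → V, Set.InjOn f ↑A ∧ ∀ a ∈ A, f a ∈ B ∧ G.Adj a (f a)

/-- The auxiliary bipartite graph `H_X` on vertex set `X ∪ N(X) ∪ {v, w}`, where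
`v = Sum.inr false` and `w = Sum.inr true`.  Its edges are the edges of `G` between
`X` and `N(X)`, the edge `vw`, and all edges from `v` to `N(X)`. -/
noncomputable def HX {V : Type*} (G : SimpleGraph V) [Fintype V] (X : Finset V) :
    SimpleGraph ({a : V // a ∈ X ∪ nbhd G X} ⊕ Bool) :=
  SimpleGraph.fromRel (fun p q =>
    match p, q with
    | Sum.inl a, Sum.inl b => a.1 ∈ X ∧ b.1 ∈ nbhd G X ∧ G.Adj a.1 b.1
    | Sum.inr false, Sum.inr true => True
    | Sum.inr false, Sum.inl b => b.1 ∈ nbhd G X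
    | _, _ => False)

/-- The copy of `X` inside the vertex set of `H_X`. -/
noncomputable def Xlift {V : Type*} (G : SimpleGraph V) [Fintype V] (X : Finset V) :
    Finset ({a : V // a ∈ X ∪ nbhd G X} ⊕ Bool) :=
  Finset.univ.filter (fun p => ∃ a : {a : V // a ∈ X ∪ nbhd G X}, p = Sum.inl a ∧ a.1 ∈ X)

/-- Edmonds–Gallai set `D`: vertices missed by some maximum matching. -/
noncomputable def gallaiD {V : Type*} (G : SimpleGraph V) [Fintype V] : Finset V :=
  Finset.univ.filter (fun v => ∃ M : Finset (Sym2 V),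
    IsMatchingF G M ∧ M.card = matchNum G ∧ ∀ e ∈ M, v ∉ e)

/-- Edmonds–Gallai set `A = N(D) - D`. -/
noncomputable def gallaiA {V : Type*} (G : SimpleGraph V) [Fintype V] : Finset V :=
  nbhd G (gallaiD G) \ gallaiD G

/-- Edmonds–Gallai set `C = V - A - D`. -/
noncomputable def gallaiC {V : Type*} (G : SimpleGraph V) [Fintype V] : Finset V :=
  (Finset.univ \ gallaiD G) \ gallaiA G

/-- The vertices of the singleton components of `G[D]`. -/
noncomputable def singlesD {V : Type*} (G : SimpleGraph V) [Fintype V] : Finset V :=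
  (gallaiD G).filter (fun v => ∀ w ∈ gallaiD G, ¬ G.Adj v w)

set_option linter.unusedSectionVars false
set_option linter.unusedVariables false
section Aux

lemma sdiff_mem_helper {V : Type*} [DecidableEq V] {s t : Finset V} {a : V}
    (h : a ∈ s \ t) : a ∈ s := (Finset.mem_sdiff.1 h).1

variable {V : Type*} (G : SimpleGraph V) [Fintype V] [DecidableEq V]

lemma mem_nbhd'' {X : Finset V} {v : V} : v ∈ nbhd G X ↔ ∃ x ∈ X, G.Adj x v := by
  simp [nbhd]

lemma nbhd_mono'' {X Y : Finset V} (h : X ⊆ Y) : nbhd G X ⊆ nbhd G Y := by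
  intro v hv
  rw [mem_nbhd''] at hv ⊢
  obtain ⟨x, hx, hadj⟩ := hv
  exact ⟨x, h hx, hadj⟩

lemma gdiff_le_critDiff'' (X : Finset V) : gdiff G X ≤ critDiff G :=
  Finset.le_sup' _ (Finset.mem_powerset.2 (Finset.subset_univ X))

lemma exists_critical'' : ∃ X : Finset V, IsCritical G X := by
  obtain ⟨X, _, h⟩ := Finset.exists_mem_eq_sup' (⟨∅, Finset.empty_mem_powerset _⟩ :
    (Finset.univ.powerset : Finset (Finset V)).Nonempty) (gdiff G)
  exact ⟨X, h.symm⟩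

lemma critical_inter'' {X Y : Finset V} (hX : IsCritical G X) (hY : IsCritical G Y) :
    IsCritical G (X ∩ Y) := by
  have hU : nbhd G (X ∪ Y) = nbhd G X ∪ nbhd G Y := by
    ext v
    simp only [mem_nbhd'', Finset.mem_union]
    constructor
    · rintro ⟨x, hx | hx, hadj⟩
      · exact Or.inl ⟨x, hx, hadj⟩
      · exact Or.inr ⟨x, hx, hadj⟩
    · rintro (⟨x, hx, hadj⟩ | ⟨x, hx, hadj⟩)
      · exact ⟨x, Or.inl hx, hadj⟩
      · exact ⟨x, Or.inr hx, hadj⟩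
  have hI : nbhd G (X ∩ Y) ⊆ nbhd G X ∩ nbhd G Y := by
    intro v hv
    rw [Finset.mem_inter]
    exact ⟨nbhd_mono'' G Finset.inter_subset_left hv,
      nbhd_mono'' G Finset.inter_subset_right hv⟩
  have c1 : (X ∪ Y).card + (X ∩ Y).card = X.card + Y.card :=
    Finset.card_union_add_card_inter X Y
  have c2 : (nbhd G (X ∪ Y)).card + (nbhd G (X ∩ Y)).card
      ≤ (nbhd G X).card + (nbhd G Y).card := by
    calc (nbhd G (X ∪ Y)).card + (nbhd G (X ∩ Y)).card
        ≤ (nbhd G X ∪ nbhd G Y).card + (nbhd G X ∩ nbhd G Y).card := by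
          rw [hU]; exact Nat.add_le_add_left (Finset.card_le_card hI) _
      _ = (nbhd G X).card + (nbhd G Y).card :=
          Finset.card_union_add_card_inter _ _
  have hXc : gdiff G X = critDiff G := hX
  have hYc : gdiff G Y = critDiff G := hY
  have h1 : gdiff G (X ∪ Y) ≤ critDiff G := gdiff_le_critDiff'' G _
  have h2 : gdiff G (X ∩ Y) ≤ critDiff G := gdiff_le_critDiff'' G _
  show gdiff G (X ∩ Y) = critDiff G
  unfold gdiff at *
  omega

lemma mem_kerG'' {v : V} : v ∈ kerG G ↔ ∀ X : Finset V, IsCritical G X → v ∈ X := by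
  simp [kerG]

lemma kerG_subset_critical'' {X : Finset V} (h : IsCritical G X) : kerG G ⊆ X :=
  fun v hv => (mem_kerG'' G).1 hv X h

lemma inf'_critical'' : ∀ (T : Finset (Finset V)) (hT : T.Nonempty),
    (∀ X ∈ T, IsCritical G X) → IsCritical G (T.inf' hT id) := by
  intro T hT
  induction hT using Finset.Nonempty.cons_induction with
  | singleton a =>
      intro h
      simpa using h a (by simp)
  | cons a s ha hs ih =>
      intro h
      rw [Finset.inf'_cons hs]
      exact critical_inter'' G (h a (Finset.mem_cons_self a s))
        (ih (fun X hX => h X (Finset.mem_cons_of_mem hX)))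


lemma kerG_critical'' : IsCritical G (kerG G) := by
  set S : Finset (Finset V) := Finset.univ.powerset.filter (IsCritical G) with hS
  have hne : S.Nonempty := by
    obtain ⟨X, hX⟩ := exists_critical'' G
    exact ⟨X, by simp [hS, hX]⟩
  have hcrit : ∀ X ∈ S, IsCritical G X := fun X hX => (Finset.mem_filter.1 hX).2
  have hker : kerG G = S.inf' hne id := by
    apply Finset.Subset.antisymm
    · exact Finset.le_inf' hne id (fun X hX => kerG_subset_critical'' G (hcrit X hX))
    · intro v hv
      rw [mem_kerG'']
      intro X hX
      have hXS : X ∈ S := by simp [hS, hX]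
      exact (Finset.inf'_le id hXS : S.inf' hne id ⊆ X) hv
  rw [hker]
  exact inf'_critical'' G S hne hcrit

lemma sdiff_nbhd_critical'' {X : Finset V} (h : IsCritical G X) :
    IsCritical G (X \ nbhd G X) := by
  set I := X \ nbhd G X with hI
  set A := X ∩ nbhd G X with hA
  have hdisj : Disjoint (nbhd G I) A := by
    rw [Finset.disjoint_left]
    intro a haI haA
    rw [mem_nbhd''] at haI
    obtain ⟨i, hiI, hadj⟩ := haI
    rw [hI, Finset.mem_sdiff] at hiI
    exact hiI.2 ((mem_nbhd'' G).2 ⟨a, (Finset.mem_inter.1 haA).1, hadj.symm⟩)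
  have hsub : nbhd G I ∪ A ⊆ nbhd G X := by
    apply Finset.union_subset
    · exact nbhd_mono'' G (Finset.sdiff_subset)
    · exact Finset.inter_subset_right
  have c1 : (nbhd G I).card + A.card ≤ (nbhd G X).card := by
    rw [← Finset.card_union_of_disjoint hdisj]
    exact Finset.card_le_card hsub
  have c2 : A.card + I.card = X.card := Finset.card_inter_add_card_sdiff X (nbhd G X)
  have h1 : gdiff G I ≤ critDiff G := gdiff_le_critDiff'' G _
  have hXc : gdiff G X = critDiff G := h
  show gdiff G I = critDiff G
  unfold gdiff at *
  omega

lemma kerG_indep'' : IsIndep G (kerG G) := by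
  intro x hx y hy hadj
  have hcrit := sdiff_nbhd_critical'' G (kerG_critical'' G)
  have hsub := kerG_subset_critical'' G hcrit
  have := hsub hy
  rw [Finset.mem_sdiff] at this
  exact this.2 ((mem_nbhd'' G).2 ⟨x, hx, hadj⟩)

lemma card_le_alpha'' {I : Finset V} (h : IsIndep G I) : I.card ≤ alphaG G :=
  Finset.le_sup (Finset.mem_filter.2 ⟨Finset.mem_powerset.2 (Finset.subset_univ I), h⟩)

lemma kerG_subset_MIS'' {I : Finset V} (hI : IsIndep G I) (hcard : I.card = alphaG G) :
    kerG G ⊆ I := by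
  by_cases hc : IsCritical G (kerG G ∩ I)
  · exact fun v hv => Finset.mem_of_mem_inter_right (kerG_subset_critical'' G hc hv)
  exfalso
  set K := kerG G with hK
  set Z := K ∩ I with hZ
  set W := K \ I with hW
  have hKc : gdiff G K = critDiff G := kerG_critical'' G
  have hZlt : gdiff G Z < critDiff G :=
    lt_of_le_of_ne (gdiff_le_critDiff'' G Z) hc
  have hNZ : nbhd G Z ⊆ nbhd G K := nbhd_mono'' G Finset.inter_subset_left
  have hNW : I ∩ nbhd G W ⊆ nbhd G K \ nbhd G Z := by
    intro i hi
    rw [Finset.mem_inter, mem_nbhd''] at hi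
    obtain ⟨hiI, w, hwW, hadj⟩ := hi
    rw [Finset.mem_sdiff]
    constructor
    · exact (mem_nbhd'' G).2 ⟨w, sdiff_mem_helper hwW, hadj⟩
    · intro hiNZ
      rw [mem_nbhd''] at hiNZ
      obtain ⟨z, hzZ, hadj'⟩ := hiNZ
      exact hI z (Finset.mem_of_mem_inter_right hzZ) i hiI hadj'
  set I' := (I \ nbhd G W) ∪ W with hI'
  have hI'indep : IsIndep G I' := by
    intro x hx y hy hadj
    rw [hI', Finset.mem_union] at hx hy
    have hWK : W ⊆ K := Finset.sdiff_subset
    rcases hx with hx | hx <;> rcases hy with hy | hy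
    · exact hI x (sdiff_mem_helper hx) y (sdiff_mem_helper hy) hadj
    · exact (Finset.mem_sdiff.1 hx).2 ((mem_nbhd'' G).2 ⟨y, hy, hadj.symm⟩)
    · exact (Finset.mem_sdiff.1 hy).2 ((mem_nbhd'' G).2 ⟨x, hx, hadj⟩)
    · exact kerG_indep'' G x (hWK hx) y (hWK hy) hadj
  have hcard' : I'.card ≤ alphaG G := card_le_alpha'' G hI'indep
  have hdisj' : Disjoint (I \ nbhd G W) W := by
    rw [Finset.disjoint_left]
    intro a ha haW
    exact (Finset.mem_sdiff.1 haW).2 (sdiff_mem_helper ha)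
  have hcI' : I'.card = (I \ nbhd G W).card + W.card :=
    Finset.card_union_of_disjoint hdisj'
  have hcIsd : (I ∩ nbhd G W).card + (I \ nbhd G W).card = I.card :=
    Finset.card_inter_add_card_sdiff I (nbhd G W)
  have hcK : Z.card + W.card = K.card := Finset.card_inter_add_card_sdiff K I
  have hm : (I ∩ nbhd G W).card ≤ (nbhd G K \ nbhd G Z).card :=
    Finset.card_le_card hNW
  have hsd : (nbhd G K \ nbhd G Z).card = (nbhd G K).card - (nbhd G Z).card :=
    Finset.card_sdiff_of_subset hNZ
  have hnle : (nbhd G Z).card ≤ (nbhd G K).card := Finset.card_le_card hNZ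
  unfold gdiff at hKc hZlt
  omega

lemma kerG_subset_core'' : kerG G ⊆ coreG G := by
  intro v hv
  simp only [coreG, Finset.mem_filter, Finset.mem_univ, true_and]
  exact fun I hI hcard => kerG_subset_MIS'' G hI hcard hv

end Aux

/-- `core G` is critical iff there is a matching from `N(core G)` into `core G`. -/
theorem stmt9 {V : Type*} (G : SimpleGraph V) [Fintype V] [DecidableEq V] [DecidableRel G.Adj] :
    IsCritical G (coreG G) ↔ MatchingFromInto G (nbhd G (coreG G)) (coreG G) := by
  constructor
  · intro hcrit
    classical
    set X := coreG G with hXdef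
    set t : {a // a ∈ nbhd G X} → Finset V :=
      fun a => X.filter (fun x => G.Adj a.1 x) with ht
    have hall : ∀ s : Finset {a // a ∈ nbhd G X}, s.card ≤ (s.biUnion t).card := by
      intro s
      by_contra hlt
      push_neg at hlt
      set S : Finset V := s.image (fun a => a.1) with hS
      have hScard : S.card = s.card :=
        Finset.card_image_of_injective s Subtype.val_injective
      have hSsub : S ⊆ nbhd G X := by
        intro v hv
        rw [hS, Finset.mem_image] at hv
        obtain ⟨a, _, rfl⟩ := hv
        exact a.2
      set T := s.biUnion t with hT
      have hTsub : T ⊆ X := by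
        intro v hv
        rw [hT, Finset.mem_biUnion] at hv
        obtain ⟨a, _, hv⟩ := hv
        exact (Finset.mem_filter.1 hv).1
      set Y := X \ T with hY
      have hNY : nbhd G Y ⊆ nbhd G X \ S := by
        intro n hn
        rw [mem_nbhd''] at hn
        obtain ⟨y, hyY, hadj⟩ := hn
        rw [hY, Finset.mem_sdiff] at hyY
        rw [Finset.mem_sdiff]
        constructor
        · exact (mem_nbhd'' G).2 ⟨y, hyY.1, hadj⟩
        · intro hnS
          rw [hS, Finset.mem_image] at hnS
          obtain ⟨a, has, hav⟩ := hnS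
          refine hyY.2 ?_
          rw [hT, Finset.mem_biUnion]
          refine ⟨a, has, ?_⟩
          rw [ht, Finset.mem_filter, hav]
          exact ⟨hyY.1, hadj.symm⟩
      have c1 : Y.card = X.card - T.card := Finset.card_sdiff_of_subset hTsub
      have c2 : (nbhd G Y).card ≤ (nbhd G X).card - S.card := by
        calc (nbhd G Y).card ≤ (nbhd G X \ S).card := Finset.card_le_card hNY
          _ = (nbhd G X).card - S.card := Finset.card_sdiff_of_subset hSsub
      have c3 : T.card ≤ X.card := Finset.card_le_card hTsub
      have c4 : S.card ≤ (nbhd G X).card := Finset.card_le_card hSsub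
      have h1 : gdiff G Y ≤ critDiff G := gdiff_le_critDiff'' G Y
      have h2 : gdiff G X = critDiff G := hcrit
      unfold gdiff at h1 h2
      omega
    obtain ⟨f, hfinj, hft⟩ := (Finset.all_card_le_biUnion_card_iff_exists_injective t).1 hall
    refine ⟨fun v => if h : v ∈ nbhd G X then f ⟨v, h⟩ else v, ?_, ?_⟩
    · intro a ha b hb hab
      rw [Finset.mem_coe] at ha hb
      have ha' : a ∈ nbhd G X := by exact_mod_cast ha
      have hb' : b ∈ nbhd G X := by exact_mod_cast hb
      simp only [dif_pos ha', dif_pos hb'] at hab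
      have := hfinj hab
      exact congrArg Subtype.val this
    · intro a ha
      simp only [dif_pos ha]
      have := hft ⟨a, ha⟩
      rw [ht, Finset.mem_filter] at this
      exact ⟨this.1, this.2⟩
  · rintro ⟨f, hinj, hf⟩
    set X := coreG G with hXdef
    set K := kerG G with hKdef
    have hKX : K ⊆ X := kerG_subset_core'' G
    have hNKX : nbhd G K ⊆ nbhd G X := nbhd_mono'' G hKX
    have hmaps : ∀ a ∈ nbhd G X \ nbhd G K, f a ∈ X \ K := by
      intro a ha
      rw [Finset.mem_sdiff] at ha
      obtain ⟨hfX, hadj⟩ := hf a ha.1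
      rw [Finset.mem_sdiff]
      exact ⟨hfX, fun hfK => ha.2 ((mem_nbhd'' G).2 ⟨f a, hfK, hadj.symm⟩)⟩
    have hinj' : Set.InjOn f ↑(nbhd G X \ nbhd G K) := by
      apply hinj.mono
      intro a ha
      rw [Finset.mem_coe, Finset.mem_sdiff] at ha
      exact Finset.mem_coe.2 ha.1
    have hcard : (nbhd G X \ nbhd G K).card ≤ (X \ K).card :=
      Finset.card_le_card_of_injOn f hmaps hinj'
    have c1 : (nbhd G X \ nbhd G K).card = (nbhd G X).card - (nbhd G K).card :=
      Finset.card_sdiff_of_subset hNKX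
    have c2 : (X \ K).card = X.card - K.card := Finset.card_sdiff_of_subset hKX
    have c3 : K.card ≤ X.card := Finset.card_le_card hKX
    have c4 : (nbhd G K).card ≤ (nbhd G X).card := Finset.card_le_card hNKX
    have hKcrit : gdiff G K = critDiff G := kerG_critical'' G
    have hle : gdiff G X ≤ critDiff G := gdiff_le_critDiff'' G X
    show gdiff G X = critDiff G
    unfold gdiff at hKcrit hle ⊢
    omega
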